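/- Under the stated assumptions, for every n ∈ ℤ and every sign σ ∈ {1, −1}, the function m has a simple pole at σ·p₁ + nπi with residue −σ·p₁/(3π) + i/6 − n·i/3; precisely, (w − (σ·p₁ + nπi))·m(w) tends to −σ·p₁/(3π) + i/6 − n·i/3 as w → σ·p₁ + nπi (w ≠ σ·p₁ + nπi). In particular the residues at p₁, p₁ + πi, p₁ − πi, p₁ + 2πi, p₁ − 2πi are −p₁/(3π) + i/6, −p₁/(3π) − i/6, −p₁/(3π) + i/2, −p₁/(3π) − i/2, −p₁/(3π) + 5i/6 respectively, and the residues at −p₁, −p₁ + πi, −p₁ − πi are p₁/(3π) + i/6, p₁/(3π) − i/6, p₁/(3π) + i/2. -/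

import Mathlib

open Complex Filter Topology

theorem residues_of_m
    (ω : ℂ) (hω : 0 < ω.im) (k : ℝ) (hk : 0 < k)
    (G₂ m : ℂ → ℂ)
    (hG₂ : ∀ w : ℂ, G₂ w = I * ω ^ 2 * Complex.sinh (2 * w) /
      (ω ^ 2 * (Complex.sinh w) ^ 2 + (k : ℂ) ^ 2))
    (hm : ∀ w : ℂ, m w = ((Real.pi + 2 * I * w) / (6 * Real.pi)) * G₂ w)
    (p₁ : ℂ) (hp : Complex.sinh p₁ = I * k / ω) (hc : Complex.cosh p₁ ≠ 0)
    (hre : p₁.re ≠ 0) :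
    ∀ n : ℤ, ∀ σ : ℂ, (σ = 1 ∨ σ = -1) →
      Tendsto (fun w => (w - (σ * p₁ + (n : ℂ) * Real.pi * I)) * m w)
        (𝓝[≠] (σ * p₁ + (n : ℂ) * Real.pi * I))
        (𝓝 (-σ * p₁ / (3 * Real.pi) + I / 6 - (n : ℂ) * I / 3)) := by
  intro n σ hσ
  have hπ : (Real.pi : ℂ) ≠ 0 := by
    exact_mod_cast Real.pi_ne_zero
  have hωne : ω ≠ 0 := by
    intro h; rw [h] at hω; simp at hω
  have hkne : (k : ℂ) ≠ 0 := by exact_mod_cast hk.ne'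
  have hσne : σ ≠ 0 := by rcases hσ with h | h <;> simp [h]
  have hsne : Complex.sinh p₁ ≠ 0 := by
    rw [hp]; exact div_ne_zero (mul_ne_zero I_ne_zero hkne) hωne
  set a : ℂ := σ * p₁ + (n : ℂ) * Real.pi * I with ha
  set c : ℂ := Complex.exp ((n : ℂ) * Real.pi * I) with hcdef
  have hc2 : c ^ 2 = 1 := by
    rw [hcdef, sq, ← Complex.exp_add]
    have h2 : (n : ℂ) * Real.pi * I + (n : ℂ) * Real.pi * I
        = (n : ℂ) * (2 * Real.pi * I) := by ring
    rw [h2, Complex.exp_int_mul_two_pi_mul_I]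
  have hcinv : c⁻¹ = c := by
    have : c * c = 1 := by rw [← sq]; exact hc2
    exact inv_eq_of_mul_eq_one_right this
  have he : Complex.exp (-((n : ℂ) * Real.pi * I)) = c := by
    rw [Complex.exp_neg, ← hcdef, hcinv]
  have hsinh0 : Complex.sinh ((n : ℂ) * Real.pi * I) = 0 := by
    have h6 := Complex.two_sinh ((n : ℂ) * Real.pi * I)
    rw [he, ← hcdef] at h6
    linear_combination h6 / 2
  have hcosh0 : Complex.cosh ((n : ℂ) * Real.pi * I) = c := by
    have h6 := Complex.two_cosh ((n : ℂ) * Real.pi * I)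
    rw [he, ← hcdef] at h6
    linear_combination h6 / 2
  have hsinh_a : Complex.sinh a = c * Complex.sinh (σ * p₁) := by
    rw [ha, Complex.sinh_add, hsinh0, hcosh0]; ring
  have hcosh_a : Complex.cosh a = c * Complex.cosh (σ * p₁) := by
    rw [ha, Complex.cosh_add, hsinh0, hcosh0]; ring
  have hss : Complex.sinh (σ * p₁) ^ 2 = Complex.sinh p₁ ^ 2 := by
    rcases hσ with h | h <;> simp [h, neg_one_mul, Complex.sinh_neg]
  have hsa2 : Complex.sinh a ^ 2 = Complex.sinh p₁ ^ 2 := by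
    rw [hsinh_a, mul_pow, hc2, one_mul, hss]
  have hDa : ω ^ 2 * Complex.sinh a ^ 2 + (k : ℂ) ^ 2 = 0 := by
    have hq : (I * k / ω) ^ 2 = -((k : ℂ) ^ 2) / ω ^ 2 := by
      rw [div_pow, mul_pow, I_sq]; ring
    rw [hsa2, hp, hq]
    field_simp
    ring
  have hsc : Complex.sinh (σ * p₁) * Complex.cosh (σ * p₁)
      = σ * (Complex.sinh p₁ * Complex.cosh p₁) := by
    rcases hσ with h | h <;>
      simp [h, neg_one_mul, Complex.sinh_neg, Complex.cosh_neg]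
  have hs2a : Complex.sinh (2 * a) = σ * (2 * Complex.sinh p₁ * Complex.cosh p₁) := by
    rw [Complex.sinh_two_mul, hsinh_a, hcosh_a]
    calc 2 * (c * Complex.sinh (σ * p₁)) * (c * Complex.cosh (σ * p₁))
        = c ^ 2 * (2 * (Complex.sinh (σ * p₁) * Complex.cosh (σ * p₁))) := by ring
      _ = σ * (2 * Complex.sinh p₁ * Complex.cosh p₁) := by
          rw [hc2, hsc]; ring
  have hs2ane : Complex.sinh (2 * a) ≠ 0 := by
    rw [hs2a]
    exact mul_ne_zero hσne (mul_ne_zero (mul_ne_zero two_ne_zero hsne) hc)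
  set d : ℂ := ω ^ 2 * Complex.sinh (2 * a) with hd
  have hdne : d ≠ 0 := mul_ne_zero (pow_ne_zero 2 hωne) hs2ane
  have hD : HasDerivAt (fun w => ω ^ 2 * Complex.sinh w ^ 2 + (k : ℂ) ^ 2) d a := by
    have h1 : HasDerivAt (fun w => Complex.sinh w ^ 2)
        (2 * Complex.sinh a * Complex.cosh a) a := by
      have := (Complex.hasDerivAt_sinh a).fun_pow 2
      simpa [mul_comm] using this
    have h2 := (h1.const_mul (ω ^ 2)).add_const ((k : ℂ) ^ 2)
    refine h2.congr_deriv ?_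
    rw [hd, Complex.sinh_two_mul]
    try ring
  have hslope := hasDerivAt_iff_tendsto_slope.mp hD
  have hinv : Tendsto (fun w => (w - a) / (ω ^ 2 * Complex.sinh w ^ 2 + (k : ℂ) ^ 2))
      (𝓝[≠] a) (𝓝 d⁻¹) := by
    have h3 := hslope.inv₀ hdne
    refine h3.congr (fun w => ?_)
    have h4 : slope (fun w => ω ^ 2 * Complex.sinh w ^ 2 + (k : ℂ) ^ 2) a w
        = (ω ^ 2 * Complex.sinh w ^ 2 + (k : ℂ) ^ 2) / (w - a) := by
      simp only [slope_def_field, hDa, sub_zero]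
    rw [h4, inv_div]
  have hcont : Tendsto (fun w => ((Real.pi : ℂ) + 2 * I * w) / (6 * Real.pi) *
      (I * ω ^ 2 * Complex.sinh (2 * w))) (𝓝[≠] a)
      (𝓝 (((Real.pi : ℂ) + 2 * I * a) / (6 * Real.pi) * (I * ω ^ 2 * Complex.sinh (2 * a)))) := by
    apply Tendsto.mono_left _ nhdsWithin_le_nhds
    apply Continuous.tendsto
    fun_prop
  have final : Tendsto (fun w => (w - a) * m w) (𝓝[≠] a)
      (𝓝 (((Real.pi : ℂ) + 2 * I * a) / (6 * Real.pi) *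
        (I * ω ^ 2 * Complex.sinh (2 * a)) * d⁻¹)) := by
    refine (hcont.mul hinv).congr (fun w => ?_)
    rw [hm w, hG₂ w]
    simp only [div_eq_mul_inv]
    ring
  have hL : ((Real.pi : ℂ) + 2 * I * a) / (6 * Real.pi) *
      (I * ω ^ 2 * Complex.sinh (2 * a)) * d⁻¹
      = -σ * p₁ / (3 * Real.pi) + I / 6 - (n : ℂ) * I / 3 := by
    have h5 : (I * ω ^ 2 * Complex.sinh (2 * a)) * d⁻¹ = I := by
      rw [hd]
      field_simp
    have hIa : ((Real.pi : ℂ) + 2 * I * (σ * p₁ + (n : ℂ) * Real.pi * I)) * I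
        = Real.pi * I - 2 * (σ * p₁) - 2 * (n : ℂ) * Real.pi * I := by
      linear_combination (2 * (σ * p₁ + (n : ℂ) * Real.pi * I)) * Complex.I_sq
    rw [mul_assoc, h5, ha, div_mul_eq_mul_div, hIa]
    field_simp
    ring
  rw [← hL]
  exact final
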